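/- A minimum-vertex counterexample to the inequality fvs ≤ 2·cp among subcubic planar multigraphs is 2-edge-connected (has no bridge). -/

import Mathlib

/- A multigraph on vertex type `V` is represented by its multiset of edges,
   each edge being an unordered pair (`Sym2 V`); loops are `s(v, v)` and
   parallel edges are repeated elements of the multiset. -/

open Classical

namespace MG

variable {V : Type*}

/-- Degree of a vertex (a loop counts twice). -/
noncomputable def deg (G : Multiset (Sym2 V)) (v : V) : ℕ :=
  (G.map fun e => if e = s(v, v) then 2 else if v ∈ e then 1 else 0).sum

/-- The vertices touched by some edge. -/
def support (G : Multiset (Sym2 V)) : Set V := {v | ∃ e ∈ G, v ∈ e}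

/-- Adjacency. -/
def Adj (G : Multiset (Sym2 V)) (a b : V) : Prop := s(a, b) ∈ G

/-- Reachability. -/
def Reach (G : Multiset (Sym2 V)) : V → V → Prop := Relation.ReflTransGen (Adj G)

/-- Connectedness (of the non-isolated vertices). -/
def Conn (G : Multiset (Sym2 V)) : Prop :=
  (support G).Nonempty ∧ ∀ a ∈ support G, ∀ b ∈ support G, Reach G a b

/-- A multigraph is a cycle iff it is nonempty, connected and 2-regular. -/
def IsCycle (C : Multiset (Sym2 V)) : Prop :=
  C ≠ 0 ∧ Conn C ∧ ∀ v ∈ support C, deg C v = 2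

/-- A forest contains no cycle. -/
def IsForest (G : Multiset (Sym2 V)) : Prop := ∀ C ≤ G, ¬ IsCycle C

/-- Delete a set of vertices (removing all incident edges). -/
noncomputable def deleteVerts (G : Multiset (Sym2 V)) (S : Set V) : Multiset (Sym2 V) :=
  G.filter fun e => ∀ v ∈ e, v ∉ S

/-- Minimum size of a feedback vertex set. -/
noncomputable def fvs (G : Multiset (Sym2 V)) : ℕ :=
  sInf {n | ∃ S : Finset V, S.card = n ∧ IsForest (deleteVerts G ↑S)}

/-- `f` is a packing of `n` pairwise vertex-disjoint cycles in `G`. -/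
def IsCyclePackingOn (G : Multiset (Sym2 V)) {n : ℕ} (f : Fin n → Multiset (Sym2 V)) : Prop :=
  (∀ i, f i ≤ G ∧ IsCycle (f i)) ∧
    ∀ i j, i ≠ j → Disjoint (support (f i)) (support (f j))

/-- Maximum size of a cycle packing. -/
noncomputable def cp (G : Multiset (Sym2 V)) : ℕ :=
  sSup {n | ∃ f : Fin n → Multiset (Sym2 V), IsCyclePackingOn G f}

/-- `H` is a minor of the multigraph `G` (branch-set definition). -/
def HasMinor {W : Type*} (G : Multiset (Sym2 V)) (H : SimpleGraph W) : Prop :=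
  ∃ B : W → Set V, (∀ w, (B w).Nonempty) ∧
    (∀ w w', w ≠ w' → Disjoint (B w) (B w')) ∧
    (∀ w, ∀ a ∈ B w, ∀ b ∈ B w,
      Relation.ReflTransGen (fun x y => Adj G x y ∧ x ∈ B w ∧ y ∈ B w) a b) ∧
    (∀ w w', H.Adj w w' → ∃ a ∈ B w, ∃ b ∈ B w', Adj G a b)

/-- Planarity, via Wagner's characterization: no `K₅` minor and no `K₃,₃` minor. -/
def Planar (G : Multiset (Sym2 V)) : Prop :=
  ¬ HasMinor G (SimpleGraph.completeGraph (Fin 5)) ∧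
    ¬ HasMinor G (completeBipartiteGraph (Fin 3) (Fin 3))

/-- All degrees are at most 3. -/
def Subcubic (G : Multiset (Sym2 V)) : Prop := ∀ v, deg G v ≤ 3

/-- `H` is a connected component of `M`. -/
def IsComponent (M H : Multiset (Sym2 V)) : Prop :=
  H ≤ M ∧ Conn H ∧ ∀ e ∈ M - H, ∀ v ∈ e, v ∉ support H

end MG
namespace MG

variable {V : Type*}

lemma exists_mem_sym2 (e : Sym2 V) : ∃ v, v ∈ e := by
  induction e using Sym2.ind with
  | _ x y => exact ⟨x, by simp⟩

lemma mem_support {G : Multiset (Sym2 V)} {v : V} :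
    v ∈ support G ↔ ∃ e ∈ G, v ∈ e := Iff.rfl

lemma support_mono {H G : Multiset (Sym2 V)} (h : H ≤ G) : support H ⊆ support G := by
  rintro v ⟨e, he, hv⟩
  exact ⟨e, Multiset.mem_of_le h he, hv⟩

lemma support_finite (G : Multiset (Sym2 V)) : (support G).Finite := by
  have h : support G ⊆ ⋃ e ∈ G.toFinset, {v | v ∈ e} := by
    rintro v ⟨e, he, hv⟩
    exact Set.mem_biUnion (Multiset.mem_toFinset.2 he) hv
  refine Set.Finite.subset (Set.Finite.biUnion G.toFinset.finite_toSet fun e _ => ?_) h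
  induction e using Sym2.ind with
  | _ x y =>
    refine Set.Finite.subset ((Set.finite_singleton y).insert x) ?_
    intro v hv
    rcases Sym2.mem_iff.1 hv with rfl | rfl <;> simp

lemma adj_symm {G : Multiset (Sym2 V)} {a b : V} (h : Adj G a b) : Adj G b a := by
  unfold Adj at *; rwa [Sym2.eq_swap]

lemma reach_mono {H G : Multiset (Sym2 V)} (h : H ≤ G) {a b : V} (hr : Reach H a b) :
    Reach G a b :=
  Relation.ReflTransGen.mono (fun _ _ hxy => Multiset.mem_of_le h hxy) a b hr

/-- weight function -/
noncomputable def w (e : Sym2 V) (v : V) : ℕ :=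
  if e = s(v, v) then 2 else if v ∈ e then 1 else 0

lemma deg_eq (G : Multiset (Sym2 V)) (v : V) :
    deg G v = (G.map fun e => w e v).sum := rfl

lemma deg_cons (e : Sym2 V) (D : Multiset (Sym2 V)) (v : V) :
    deg (e ::ₘ D) v = w e v + deg D v := by
  rw [deg_eq, Multiset.map_cons, Multiset.sum_cons, deg_eq]

lemma deg_add (A B : Multiset (Sym2 V)) (v : V) : deg (A + B) v = deg A v + deg B v := by
  rw [deg_eq, Multiset.map_add, Multiset.sum_add, deg_eq, deg_eq]

lemma deg_mono {H G : Multiset (Sym2 V)} (h : H ≤ G) (v : V) : deg H v ≤ deg G v := by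
  obtain ⟨D, rfl⟩ := Multiset.le_iff_exists_add.1 h
  rw [deg_add]; omega

lemma mem_support_of_deg_ne_zero {G : Multiset (Sym2 V)} {v : V} (h : deg G v ≠ 0) :
    v ∈ support G := by
  by_contra hv
  apply h
  rw [deg_eq]
  refine Multiset.sum_eq_zero ?_
  intro x hx
  obtain ⟨e, he, rfl⟩ := Multiset.mem_map.1 hx
  have hve : v ∉ e := fun hve => hv ⟨e, he, hve⟩
  rw [w, if_neg, if_neg hve]
  rintro rfl
  exact hve (by simp)

lemma subcubic_mono {H G : Multiset (Sym2 V)} (h : H ≤ G) (hs : Subcubic G) : Subcubic H :=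
  fun v => (deg_mono h v).trans (hs v)

lemma hasMinor_mono {W : Type*} {K : SimpleGraph W} {H G : Multiset (Sym2 V)} (h : H ≤ G) :
    HasMinor H K → HasMinor G K := by
  rintro ⟨B, h1, h2, h3, h4⟩
  refine ⟨B, h1, h2, fun w a ha b hb => Relation.ReflTransGen.mono ?_ a b (h3 w a ha b hb),
    fun w w' hww' => ?_⟩
  · rintro x y ⟨hxy, hx, hy⟩
    exact ⟨Multiset.mem_of_le h hxy, hx, hy⟩
  · obtain ⟨a, ha, b, hb, hab⟩ := h4 w w' hww'
    exact ⟨a, ha, b, hb, Multiset.mem_of_le h hab⟩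

lemma planar_mono {H G : Multiset (Sym2 V)} (h : H ≤ G) (hp : Planar G) : Planar H :=
  ⟨fun hm => hp.1 (hasMinor_mono h hm), fun hm => hp.2 (hasMinor_mono h hm)⟩

end MG
namespace MG

variable {V : Type*}

lemma isForest_zero : IsForest (0 : Multiset (Sym2 V)) := by
  intro C hC hcyc
  exact hcyc.1 (Multiset.le_zero.1 hC)

lemma fvs_nonempty (G : Multiset (Sym2 V)) :
    {n | ∃ S : Finset V, S.card = n ∧ IsForest (deleteVerts G ↑S)}.Nonempty := by
  classical
  refine ⟨(support_finite G).toFinset.card, (support_finite G).toFinset, rfl, ?_⟩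
  have : deleteVerts G ↑(support_finite G).toFinset = 0 := by
    rw [deleteVerts, Multiset.filter_eq_nil]
    intro e he h
    obtain ⟨v, hv⟩ := exists_mem_sym2 e
    exact h v hv (by simp [Set.Finite.mem_toFinset]; exact ⟨e, he, hv⟩)
  rw [this]
  exact isForest_zero

lemma fvs_spec (G : Multiset (Sym2 V)) :
    ∃ S : Finset V, S.card = fvs G ∧ IsForest (deleteVerts G ↑S) := by
  have h := Nat.sInf_mem (fvs_nonempty G)
  obtain ⟨S, hS, hF⟩ := h
  exact ⟨S, hS, hF⟩

lemma fvs_le (G : Multiset (Sym2 V)) (S : Finset V) (h : IsForest (deleteVerts G ↑S)) :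
    fvs G ≤ S.card :=
  Nat.sInf_le ⟨S, rfl, h⟩

lemma cp_bddAbove (G : Multiset (Sym2 V)) :
    BddAbove {n | ∃ f : Fin n → Multiset (Sym2 V), IsCyclePackingOn G f} := by
  classical
  refine ⟨G.toFinset.card, ?_⟩
  rintro n ⟨f, hf, hdisj⟩
  have hch : ∀ i : Fin n, ∃ e, e ∈ f i := fun i =>
    Multiset.exists_mem_of_ne_zero (hf i).2.1
  choose g hg using hch
  have hmaps : ∀ i ∈ (Finset.univ : Finset (Fin n)), g i ∈ G.toFinset := fun i _ =>
    Multiset.mem_toFinset.2 (Multiset.mem_of_le (hf i).1 (hg i))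
  have hinj : Set.InjOn g (Finset.univ : Finset (Fin n)) := by
    intro i _ j _ hij
    by_contra hne
    obtain ⟨v, hv⟩ := exists_mem_sym2 (g i)
    exact Set.disjoint_left.1 (hdisj i j hne) ⟨g i, hg i, hv⟩ ⟨g j, hg j, hij ▸ hv⟩
  have := Finset.card_le_card_of_injOn g hmaps hinj
  simpa using this

lemma cp_nonempty (G : Multiset (Sym2 V)) :
    (0 : ℕ) ∈ {n | ∃ f : Fin n → Multiset (Sym2 V), IsCyclePackingOn G f} :=
  ⟨fun i => i.elim0, fun i => i.elim0, fun i => i.elim0⟩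

lemma cp_spec (G : Multiset (Sym2 V)) :
    ∃ f : Fin (cp G) → Multiset (Sym2 V), IsCyclePackingOn G f :=
  Nat.sSup_mem ⟨0, cp_nonempty G⟩ (cp_bddAbove G)

lemma cp_ge (G : Multiset (Sym2 V)) {n : ℕ} (f : Fin n → Multiset (Sym2 V))
    (h : IsCyclePackingOn G f) : n ≤ cp G :=
  le_csSup (cp_bddAbove G) ⟨f, h⟩

end MG
namespace MG

variable {V : Type*}

lemma sum_deg_eq (D : Multiset (Sym2 V)) (F : Finset V) :
    ∑ v ∈ F, deg D v = (D.map fun e => ∑ v ∈ F, w e v).sum := by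
  induction D using Multiset.induction with
  | empty => simp [deg_eq]
  | cons e D ih =>
    simp only [Multiset.map_cons, Multiset.sum_cons, ← ih]
    rw [← Finset.sum_add_distrib]
    exact Finset.sum_congr rfl fun v _ => deg_cons e D v

lemma w_eq_zero {e : Sym2 V} {v : V} (h : v ∉ e) : w e v = 0 := by
  rw [w, if_neg, if_neg h]
  rintro rfl; exact h (by simp)

lemma sum_w_of_mem {F : Finset V} {x y : V} (hx : x ∈ F) (hy : y ∈ F) :
    ∑ v ∈ F, w s(x, y) v = 2 := by
  by_cases hxy : x = y
  · subst hxy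
    have hw : ∀ v, w s(x, x) v = if v = x then 2 else 0 := by
      intro v
      by_cases hv : v = x
      · subst hv; simp [w]
      · rw [if_neg hv, w_eq_zero]
        simp [Sym2.mem_iff, hv]
    rw [Finset.sum_congr rfl fun v _ => hw v, Finset.sum_ite_eq' F x fun _ => 2, if_pos hx]
  · have hw : ∀ v, w s(x, y) v = (if v = x then 1 else 0) + (if v = y then 1 else 0) := by
      intro v
      by_cases hvx : v = x
      · subst hvx
        rw [w, if_neg, if_pos, if_pos rfl, if_neg (by exact hxy)]
        · simp
        · rw [Sym2.eq_iff]
          rintro (⟨_, h⟩ | ⟨_, h⟩) <;> exact hxy h.symm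
      · by_cases hvy : v = y
        · subst hvy
          rw [w, if_neg, if_pos, if_neg hvx, if_pos rfl]
          · simp [Sym2.mem_iff]
          · rw [Sym2.eq_iff]
            rintro (⟨h, _⟩ | ⟨h, _⟩) <;> exact hxy h
        · rw [if_neg hvx, if_neg hvy, w_eq_zero]
          simp [Sym2.mem_iff, hvx, hvy]
    rw [Finset.sum_congr rfl fun v _ => hw v, Finset.sum_add_distrib,
      Finset.sum_ite_eq' F x fun _ => 1, Finset.sum_ite_eq' F y fun _ => 1,
      if_pos hx, if_pos hy]

lemma sum_w_of_disj {F : Finset V} {e : Sym2 V} (h : ∀ v ∈ F, v ∉ e) :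
    ∑ v ∈ F, w e v = 0 :=
  Finset.sum_eq_zero fun v hv => w_eq_zero (h v hv)

lemma cycle_erase_reach {C : Multiset (Sym2 V)} (hC : IsCycle C) {a b : V}
    (he : s(a, b) ∈ C) : Reach (C.erase s(a, b)) a b := by
  classical
  by_cases hab : a = b
  · subst hab; exact Relation.ReflTransGen.refl
  by_contra hnot
  set D := C.erase s(a, b) with hD
  have hCD : C = s(a, b) ::ₘ D := (Multiset.cons_erase he).symm
  have hDle : D ≤ C := Multiset.erase_le _ _
  set S : Set V := {v | Reach D a v} with hS
  have haS : a ∈ S := Relation.ReflTransGen.refl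
  have hbS : b ∉ S := hnot
  have hSclosed : ∀ x y, x ∈ S → Adj D x y → y ∈ S := fun x y hx hxy =>
    Relation.ReflTransGen.tail hx hxy
  set F : Finset V := (support_finite D).toFinset.filter (· ∈ S) with hF
  have hmemF : ∀ v, v ∈ F ↔ v ∈ support D ∧ v ∈ S := by
    intro v; simp [hF, Set.Finite.mem_toFinset]
  -- degree facts
  have hwa : w s(a, b) a = 1 := by
    rw [w, if_neg, if_pos (by simp)]
    rw [Sym2.eq_iff]
    rintro (⟨_, h⟩ | ⟨_, h⟩) <;> exact hab h.symm
  have hdega : deg D a = 1 := by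
    have h2 : deg C a = 2 := hC.2.2 a ⟨s(a, b), he, by simp⟩
    rw [hCD, deg_cons, hwa] at h2
    omega
  have haF : a ∈ F := (hmemF a).2 ⟨mem_support_of_deg_ne_zero (by omega), haS⟩
  have hdegv : ∀ v ∈ F, v ≠ a → deg D v = 2 := by
    intro v hv hva
    obtain ⟨hvsup, hvS⟩ := (hmemF v).1 hv
    have hvb : v ≠ b := by rintro rfl; exact hbS hvS
    have hvsupC : v ∈ support C := support_mono hDle hvsup
    have h2 : deg C v = 2 := hC.2.2 v hvsupC
    have hw0 : w s(a, b) v = 0 := w_eq_zero (by simp [Sym2.mem_iff, hva, hvb])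
    rw [hCD, deg_cons, hw0] at h2
    omega
  -- sum of degrees over F is odd
  have hodd : ∑ v ∈ F, deg D v = 1 + 2 * (F.erase a).card := by
    rw [← Finset.add_sum_erase F _ haF, hdega]
    congr 1
    rw [Finset.sum_congr rfl fun v hv => hdegv v (Finset.mem_of_mem_erase hv)
      (Finset.ne_of_mem_erase hv), Finset.sum_const, smul_eq_mul]
    ring
  -- sum of degrees over F is even
  have heven : 2 ∣ ∑ v ∈ F, deg D v := by
    rw [sum_deg_eq]
    refine Multiset.dvd_sum ?_
    intro x hx
    obtain ⟨e, heD, rfl⟩ := Multiset.mem_map.1 hx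
    induction e using Sym2.ind with
    | _ x y =>
      by_cases hxS : x ∈ S
      · have hadj : Adj D x y := heD
        have hyS : y ∈ S := hSclosed x y hxS hadj
        have hxF : x ∈ F := (hmemF x).2 ⟨⟨s(x, y), heD, by simp⟩, hxS⟩
        have hyF : y ∈ F := (hmemF y).2 ⟨⟨s(x, y), heD, by simp⟩, hyS⟩
        rw [sum_w_of_mem hxF hyF]
      · have hyS : y ∉ S := fun hyS =>
          hxS (hSclosed y x hyS (adj_symm heD))
        rw [sum_w_of_disj]
        · exact dvd_zero 2
        · intro v hv hve
          have hvS := ((hmemF v).1 hv).2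
          rcases Sym2.mem_iff.1 hve with rfl | rfl
          · exact hxS hvS
          · exact hyS hvS
  rw [hodd] at heven
  omega

end MG
namespace MG

variable {V : Type*}

lemma deleteVerts_le (G : Multiset (Sym2 V)) (S : Set V) : deleteVerts G S ≤ G :=
  Multiset.filter_le _ _

lemma fvs_subadd {G G1 G2 : Multiset (Sym2 V)} (h1 : G1 ≤ G) (h2 : G2 ≤ G)
    (hsplit : ∀ C ≤ G, IsCycle C → C ≤ G1 ∨ C ≤ G2) :
    fvs G ≤ fvs G1 + fvs G2 := by
  classical
  obtain ⟨S1, hS1, hF1⟩ := fvs_spec G1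
  obtain ⟨S2, hS2, hF2⟩ := fvs_spec G2
  have hforest : IsForest (deleteVerts G ↑(S1 ∪ S2)) := by
    intro C hCle hcyc
    have hCG : C ≤ G := hCle.trans (deleteVerts_le _ _)
    have hprop : ∀ e ∈ C, ∀ v ∈ e, v ∉ (↑(S1 ∪ S2) : Set V) := by
      intro e heC
      exact Multiset.of_mem_filter (Multiset.mem_of_le hCle heC)
    rcases hsplit C hCG hcyc with h | h
    · refine hF1 C ?_ hcyc
      show C ≤ Multiset.filter _ G1
      refine Multiset.le_filter.2 ⟨h, ?_⟩
      intro e heC v hv hvS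
      exact hprop e heC v hv (by simp [hvS])
    · refine hF2 C ?_ hcyc
      show C ≤ Multiset.filter _ G2
      refine Multiset.le_filter.2 ⟨h, ?_⟩
      intro e heC v hv hvS
      exact hprop e heC v hv (by simp [hvS])
  calc fvs G ≤ (S1 ∪ S2).card := fvs_le G _ hforest
    _ ≤ S1.card + S2.card := Finset.card_union_le _ _
    _ = fvs G1 + fvs G2 := by rw [hS1, hS2]

lemma cp_superadd {G G1 G2 : Multiset (Sym2 V)} (h1 : G1 ≤ G) (h2 : G2 ≤ G)
    (hd : Disjoint (support G1) (support G2)) :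
    cp G1 + cp G2 ≤ cp G := by
  classical
  obtain ⟨f1, hf1⟩ := cp_spec G1
  obtain ⟨f2, hf2⟩ := cp_spec G2
  refine cp_ge G (fun i : Fin (cp G1 + cp G2) =>
    if h : (i : ℕ) < cp G1 then f1 ⟨i, h⟩ else f2 ⟨(i : ℕ) - cp G1, by omega⟩) ⟨?_, ?_⟩
  · intro i
    by_cases h : (i : ℕ) < cp G1
    · simp only [dif_pos h]
      exact ⟨(hf1.1 _).1.trans h1, (hf1.1 _).2⟩
    · simp only [dif_neg h]
      exact ⟨(hf2.1 _).1.trans h2, (hf2.1 _).2⟩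
  · intro i j hij
    have hd12 : ∀ (p : Fin (cp G1)) (q : Fin (cp G2)), Disjoint (support (f1 p)) (support (f2 q)) :=
      fun p q => hd.mono (support_mono (hf1.1 p).1) (support_mono (hf2.1 q).1)
    by_cases hi : (i : ℕ) < cp G1 <;> by_cases hj : (j : ℕ) < cp G1
    · simp only [dif_pos hi, dif_pos hj]
      refine hf1.2 _ _ ?_
      intro h
      exact hij (Fin.ext (congrArg Fin.val h : _))
    · simp only [dif_pos hi, dif_neg hj]
      exact hd12 _ _
    · simp only [dif_neg hi, dif_pos hj]
      exact (hd12 _ _).symm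
    · simp only [dif_neg hi, dif_neg hj]
      refine hf2.2 _ _ ?_
      intro h
      have := congrArg Fin.val h
      simp only at this
      have hij' : (i : ℕ) ≠ (j : ℕ) := fun hh => hij (Fin.ext hh)
      omega

lemma reach_split {G' : Multiset (Sym2 V)} {S : Set V}
    (hS : ∀ x y, x ∈ S → Adj G' x y → y ∈ S) :
    ∃ G1 G2 : Multiset (Sym2 V), G1 ≤ G' ∧ G2 ≤ G' ∧
      support G1 ⊆ S ∧ (∀ v ∈ support G2, v ∉ S) ∧
      ∀ C ≤ G', IsCycle C → C ≤ G1 ∨ C ≤ G2 := by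
  classical
  set p : Sym2 V → Prop := fun e => ∀ v ∈ e, v ∈ S with hp
  have hedge : ∀ e ∈ G', ∀ x ∈ e, x ∈ S → ∀ y ∈ e, y ∈ S := by
    intro e heG'
    induction e using Sym2.ind with
    | _ u v =>
      intro x hx hxS y hy
      have hadj : Adj G' u v := heG'
      have huv : u ∈ S ∧ v ∈ S := by
        rcases Sym2.mem_iff.1 hx with rfl | rfl
        · exact ⟨hxS, hS x v hxS hadj⟩
        · exact ⟨hS x u hxS (adj_symm hadj), hxS⟩
      rcases Sym2.mem_iff.1 hy with rfl | rfl
      · exact huv.1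
      · exact huv.2
  refine ⟨G'.filter p, G'.filter (fun e => ¬ p e), Multiset.filter_le _ _,
    Multiset.filter_le _ _, ?_, ?_, ?_⟩
  · rintro v ⟨e, he, hv⟩
    exact Multiset.of_mem_filter he v hv
  · rintro v ⟨e, he, hv⟩ hvS
    exact Multiset.of_mem_filter he (hedge e (Multiset.mem_of_le (Multiset.filter_le _ _) he)
      v hv hvS)
  · intro C hCle hcyc
    have hreach : ∀ x y, x ∈ S → Reach C x y → y ∈ S := by
      intro x y hx hr
      induction hr with
      | refl => exact hx
      | tail _ hadj ih => exact hS _ _ ih (Multiset.mem_of_le hCle hadj)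
    by_cases hex : ∃ x ∈ support C, x ∈ S
    · obtain ⟨x, hxC, hxS⟩ := hex
      left
      refine Multiset.le_filter.2 ⟨hCle, ?_⟩
      intro e heC v hv
      have hvC : v ∈ support C := ⟨e, heC, hv⟩
      exact hreach x v hxS (hcyc.2.1.2 x hxC v hvC)
    · right
      refine Multiset.le_filter.2 ⟨hCle, ?_⟩
      intro e heC hpe
      obtain ⟨v, hv⟩ := exists_mem_sym2 e
      exact hex ⟨v, ⟨e, heC, hv⟩, hpe v hv⟩

lemma no_split {G : Multiset (Sym2 V)}
    (hsub : Subcubic G) (hplanar : Planar G)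
    (hcex : 2 * cp G < fvs G)
    (hmin : ∀ H : Multiset (Sym2 V), Subcubic H → Planar H →
      (support H).ncard < (support G).ncard → fvs H ≤ 2 * cp H)
    {G1 G2 : Multiset (Sym2 V)} (h1 : G1 ≤ G) (h2 : G2 ≤ G)
    (hd : Disjoint (support G1) (support G2))
    (hsplit : ∀ C ≤ G, IsCycle C → C ≤ G1 ∨ C ≤ G2)
    (hs1 : (support G1).ncard < (support G).ncard)
    (hs2 : (support G2).ncard < (support G).ncard) : False := by
  have e1 := hmin G1 (subcubic_mono h1 hsub) (planar_mono h1 hplanar) hs1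
  have e2 := hmin G2 (subcubic_mono h2 hsub) (planar_mono h2 hplanar) hs2
  have hf := fvs_subadd h1 h2 hsplit
  have hc := cp_superadd h1 h2 hd
  omega

end MG
/-- A minimum-vertex counterexample to `fvs ≤ 2 * cp` among subcubic planar
multigraphs is 2-edge-connected: it is connected and has no bridge. -/
theorem min_counterexample_two_edge_connected {V : Type*} (G : Multiset (Sym2 V))
    (hsub : MG.Subcubic G) (hplanar : MG.Planar G)
    (hcex : 2 * MG.cp G < MG.fvs G)
    (hmin : ∀ H : Multiset (Sym2 V), MG.Subcubic H → MG.Planar H →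
      (MG.support H).ncard < (MG.support G).ncard → MG.fvs H ≤ 2 * MG.cp H) :
    MG.Conn G ∧ ∀ a b : V, s(a, b) ∈ G → MG.Reach (G.erase s(a, b)) a b := by
  classical
  have hG0 : G ≠ 0 := by
    rintro rfl
    have h0 : MG.fvs (0 : Multiset (Sym2 V)) ≤ (∅ : Finset V).card := by
      refine MG.fvs_le _ _ ?_
      have h00 : MG.deleteVerts (0 : Multiset (Sym2 V)) (↑(∅ : Finset V)) = 0 := rfl
      rw [h00]
      exact MG.isForest_zero
    simp at h0
    omega
  obtain ⟨e0, he0⟩ := Multiset.exists_mem_of_ne_zero hG0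
  obtain ⟨v0, hv0⟩ := MG.exists_mem_sym2 e0
  have hv0G : v0 ∈ MG.support G := ⟨e0, he0, hv0⟩
  have hfin := MG.support_finite G
  have hconn : ∀ a ∈ MG.support G, ∀ b ∈ MG.support G, MG.Reach G a b := by
    by_contra h
    push_neg at h
    obtain ⟨a, ha, b, hb, hnr⟩ := h
    set S : Set V := {v | MG.Reach G a v} with hS
    have hcl : ∀ x y, x ∈ S → MG.Adj G x y → y ∈ S := fun x y hx hxy =>
      Relation.ReflTransGen.tail hx hxy
    obtain ⟨G1, G2, h1, h2, hsub1, hsub2, hsplit⟩ := MG.reach_split hcl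
    have haS : a ∈ S := Relation.ReflTransGen.refl
    have hd : Disjoint (MG.support G1) (MG.support G2) :=
      Set.disjoint_left.2 fun v hv1 hv2 => hsub2 v hv2 (hsub1 hv1)
    have hs1 : (MG.support G1).ncard < (MG.support G).ncard := by
      refine Set.ncard_lt_ncard ?_ hfin
      rw [Set.ssubset_iff_of_subset (MG.support_mono h1)]
      exact ⟨b, hb, fun hbG1 => hnr (hsub1 hbG1)⟩
    have hs2 : (MG.support G2).ncard < (MG.support G).ncard := by
      refine Set.ncard_lt_ncard ?_ hfin
      rw [Set.ssubset_iff_of_subset (MG.support_mono h2)]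
      exact ⟨a, ha, fun haG2 => hsub2 a haG2 haS⟩
    exact MG.no_split hsub hplanar hcex hmin h1 h2 hd hsplit hs1 hs2
  refine ⟨⟨⟨v0, hv0G⟩, hconn⟩, ?_⟩
  intro a b hab
  by_cases habe : a = b
  · subst habe
    exact Relation.ReflTransGen.refl
  by_cases hpar : s(a, b) ∈ G.erase s(a, b)
  · exact Relation.ReflTransGen.single hpar
  by_contra hnot
  set G' := G.erase s(a, b) with hG'
  have hG'le : G' ≤ G := Multiset.erase_le _ _
  set S : Set V := {v | MG.Reach G' a v} with hS
  have hcl : ∀ x y, x ∈ S → MG.Adj G' x y → y ∈ S := fun x y hx hxy =>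
    Relation.ReflTransGen.tail hx hxy
  obtain ⟨G1, G2, h1', h2', hsub1, hsub2, hsplit'⟩ := MG.reach_split hcl
  have h1 : G1 ≤ G := h1'.trans hG'le
  have h2 : G2 ≤ G := h2'.trans hG'le
  have haS : a ∈ S := Relation.ReflTransGen.refl
  have hbS : b ∉ S := hnot
  have haG : a ∈ MG.support G := ⟨s(a, b), hab, by simp⟩
  have hbG : b ∈ MG.support G := ⟨s(a, b), hab, by simp⟩
  have hd : Disjoint (MG.support G1) (MG.support G2) :=
    Set.disjoint_left.2 fun v hv1 hv2 => hsub2 v hv2 (hsub1 hv1)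
  have hsplit : ∀ C ≤ G, MG.IsCycle C → C ≤ G1 ∨ C ≤ G2 := by
    intro C hC hcyc
    by_cases heC : s(a, b) ∈ C
    · exact absurd (MG.reach_mono (Multiset.erase_le_erase _ hC)
        (MG.cycle_erase_reach hcyc heC)) hnot
    · refine hsplit' C ?_ hcyc
      rw [Multiset.le_iff_count]
      intro x
      by_cases hx : x = s(a, b)
      · subst hx
        rw [Multiset.count_eq_zero.2 heC]
        exact Nat.zero_le _
      · rw [hG', Multiset.count_erase_of_ne hx]
        exact Multiset.le_iff_count.1 hC x
  have hs1 : (MG.support G1).ncard < (MG.support G).ncard := by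
    refine Set.ncard_lt_ncard ?_ hfin
    rw [Set.ssubset_iff_of_subset (MG.support_mono h1)]
    exact ⟨b, hbG, fun hbG1 => hbS (hsub1 hbG1)⟩
  have hs2 : (MG.support G2).ncard < (MG.support G).ncard := by
    refine Set.ncard_lt_ncard ?_ hfin
    rw [Set.ssubset_iff_of_subset (MG.support_mono h2)]
    exact ⟨a, haG, fun haG2 => hsub2 a haG2 haS⟩
  exact MG.no_split hsub hplanar hcex hmin h1 h2 hd hsplit hs1 hs2
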